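/- If a PSO 𝔅 is orthogonal preserving and fixes every vertex of the simplex, then 𝔅 is surjective. -/

import Mathlib

noncomputable def PSO (m l : ℕ) (P : (Fin l → Fin m) → Fin m → ℝ)
    (x : Fin m → ℝ) : Fin m → ℝ :=
  fun k => ∑ i : Fin l → Fin m, (∏ s, x (i s)) * P i k

def supp {m : ℕ} (x : Fin m → ℝ) : Set (Fin m) := {k | x k ≠ 0}

def OrthPreserving (m : ℕ) (B : (Fin m → ℝ) → (Fin m → ℝ)) : Prop :=
  ∀ x ∈ stdSimplex ℝ (Fin m), ∀ y ∈ stdSimplex ℝ (Fin m),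
    supp x ∩ supp y = ∅ → supp (B x) ∩ supp (B y) = ∅


open Finset Classical

namespace SpernerAux

noncomputable section

/-- move `c` : transfer one unit from coordinate `c` to coordinate `c+1`. -/
def mv (c : ℕ) : ℕ → ℤ := fun k => (if k = c + 1 then 1 else 0) - (if k = c then 1 else 0)

abbrev Cell := (ℕ → ℤ) × (ℕ → ℕ)

/-- the `i`-th vertex of a cell -/
def vtx (C : Cell) (i : ℕ) : ℕ → ℤ := fun k => C.1 k + ∑ t ∈ Finset.range i, mv (C.2 t) k

def IsPerm (d : ℕ) (σ : ℕ → ℕ) : Prop := Function.Bijective σ ∧ ∀ t, d ≤ t → σ t = t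

def validPt (d N : ℕ) (v : ℕ → ℤ) : Prop :=
  (∀ k, 0 ≤ v k) ∧ (∀ k, d < k → v k = 0) ∧ (∑ k ∈ Finset.range (d+1), v k = (N : ℤ))

def validCell (d N : ℕ) (C : Cell) : Prop := IsPerm d C.2 ∧ ∀ i ≤ d, validPt d N (vtx C i)

def isDoor (d N : ℕ) (L : (ℕ → ℤ) → ℕ) (C : Cell) (i : ℕ) : Prop :=
  validCell d N C ∧ i ≤ d ∧ ∀ k < d, ∃ j, j ≤ d ∧ j ≠ i ∧ L (vtx C j) = k

def isFull (d N : ℕ) (L : (ℕ → ℤ) → ℕ) (C : Cell) : Prop :=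
  validCell d N C ∧ ∀ k ≤ d, ∃ j, j ≤ d ∧ L (vtx C j) = k

lemma IsPerm.lt {d σ} (h : IsPerm d σ) {t : ℕ} (ht : t < d) : σ t < d := by
  by_contra hge
  push_neg at hge
  have h1 : σ (σ t) = σ t := h.2 _ hge
  have := h.1.1 h1
  omega

lemma IsPerm.exists_pos {d σ} (h : IsPerm d σ) {c : ℕ} (hc : c < d) : ∃ t, t < d ∧ σ t = c := by
  obtain ⟨t, ht⟩ := h.1.2 c
  refine ⟨t, ?_, ht⟩
  by_contra hge
  push_neg at hge
  have := h.2 t hge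
  omega

/-- The key coordinate formula for vertices of a cell. -/
lemma vtx_coord (C : Cell) (hσ : Function.Injective C.2) (j k : ℕ) :
    vtx C j k = C.1 k + (if ∃ t, t < j ∧ C.2 t + 1 = k then 1 else 0)
      - (if ∃ t, t < j ∧ C.2 t = k then 1 else 0) := by
  induction j with
  | zero => simp [vtx]
  | succ j ih =>
    have hv : vtx C (j+1) k = vtx C j k + mv (C.2 j) k := by
      simp [vtx, Finset.sum_range_succ, add_assoc]
    rw [hv, ih]
    have e1 : (∃ t, t < j + 1 ∧ C.2 t + 1 = k) ↔ (∃ t, t < j ∧ C.2 t + 1 = k) ∨ C.2 j + 1 = k := by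
      constructor
      · rintro ⟨t, ht, h⟩
        rcases Nat.lt_succ_iff_lt_or_eq.mp ht with h' | rfl
        · exact Or.inl ⟨t, h', h⟩
        · exact Or.inr h
      · rintro (⟨t, ht, h⟩ | h)
        · exact ⟨t, by omega, h⟩
        · exact ⟨j, by omega, h⟩
    have e2 : (∃ t, t < j + 1 ∧ C.2 t = k) ↔ (∃ t, t < j ∧ C.2 t = k) ∨ C.2 j = k := by
      constructor
      · rintro ⟨t, ht, h⟩
        rcases Nat.lt_succ_iff_lt_or_eq.mp ht with h' | rfl
        · exact Or.inl ⟨t, h', h⟩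
        · exact Or.inr h
      · rintro (⟨t, ht, h⟩ | h)
        · exact ⟨t, by omega, h⟩
        · exact ⟨j, by omega, h⟩
    by_cases h1 : C.2 j + 1 = k
    · have hne : C.2 j ≠ k := by omega
      have hold : ¬ (∃ t, t < j ∧ C.2 t + 1 = k) := by
        rintro ⟨t, ht, h⟩
        have : C.2 t = C.2 j := by omega
        have := hσ this
        omega
      have h2' : (∃ t, t < j + 1 ∧ C.2 t = k) ↔ (∃ t, t < j ∧ C.2 t = k) := by
        rw [e2]; simp [hne]
      have hP' : ∃ t, t < j + 1 ∧ C.2 t + 1 = k := ⟨j, by omega, h1⟩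
      have hm : mv (C.2 j) k = 1 := by
        simp [mv, h1.symm, if_neg (Ne.symm hne)]
      simp only [if_neg hold, if_pos hP', h2', hm]
      ring
    · by_cases h2 : C.2 j = k
      · have hold : ¬ (∃ t, t < j ∧ C.2 t = k) := by
          rintro ⟨t, ht, h⟩
          have := hσ (h.trans h2.symm)
          omega
        have h1' : (∃ t, t < j + 1 ∧ C.2 t + 1 = k) ↔ (∃ t, t < j ∧ C.2 t + 1 = k) := by
          rw [e1]; simp [h1]
        have hQ' : ∃ t, t < j + 1 ∧ C.2 t = k := ⟨j, by omega, h2⟩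
        have hm : mv (C.2 j) k = -1 := by
          simp [mv, h2.symm, if_neg (by omega : k ≠ C.2 j + 1)]
        simp only [if_neg hold, if_pos hQ', h1', hm]
        ring
      · have h1' : (∃ t, t < j + 1 ∧ C.2 t + 1 = k) ↔ (∃ t, t < j ∧ C.2 t + 1 = k) := by
          rw [e1]; simp [h1]
        have h2' : (∃ t, t < j + 1 ∧ C.2 t = k) ↔ (∃ t, t < j ∧ C.2 t = k) := by
          rw [e2]; simp [h2]
        have hm : mv (C.2 j) k = 0 := by
          simp [mv, if_neg (Ne.symm h1), if_neg (Ne.symm h2)]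
        simp only [h1', h2', hm]
        ring


/-! ### rotations and permutation helpers -/

def rot (d : ℕ) : ℕ → ℕ := fun t => if t + 1 < d then t + 1 else if t + 1 = d then 0 else t

def rotInv (d : ℕ) : ℕ → ℕ := fun t => if t = 0 then d - 1 else if t < d then t - 1 else t

lemma rot_rotInv (d t : ℕ) : rot d (rotInv d t) = t := by
  by_cases h1 : t = 0
  · have h : rotInv d t = d - 1 := by simp [rotInv, h1]
    rw [h, h1]; simp only [rot]; split_ifs <;> (try contradiction) <;> omega
  · by_cases h2 : t < d
    · have h : rotInv d t = t - 1 := by simp [rotInv, h1, h2]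
      rw [h]; simp only [rot]; split_ifs <;> (try contradiction) <;> omega
    · have h : rotInv d t = t := by simp [rotInv, h1, h2]
      rw [h]; simp only [rot]; split_ifs <;> (try contradiction) <;> omega

lemma rotInv_rot (d t : ℕ) : rotInv d (rot d t) = t := by
  by_cases h1 : t + 1 < d
  · have h : rot d t = t + 1 := by simp [rot, h1]
    rw [h]; simp only [rotInv]; split_ifs <;> (try contradiction) <;> omega
  · by_cases h2 : t + 1 = d
    · have h : rot d t = 0 := by simp [rot, h1, h2]
      rw [h]; simp only [rotInv]; split_ifs <;> (try contradiction) <;> omega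
    · have h : rot d t = t := by simp [rot, h1, h2]
      rw [h]; simp only [rotInv]; split_ifs <;> (try contradiction) <;> omega

lemma rot_bij (d : ℕ) : Function.Bijective (rot d) :=
  Function.bijective_iff_has_inverse.mpr ⟨rotInv d, fun t => rotInv_rot d t, fun t => rot_rotInv d t⟩

lemma rotInv_bij (d : ℕ) : Function.Bijective (rotInv d) :=
  Function.bijective_iff_has_inverse.mpr ⟨rot d, fun t => rot_rotInv d t, fun t => rotInv_rot d t⟩

lemma rot_high (d t : ℕ) (h : d ≤ t) : rot d t = t := by
  simp only [rot]; split_ifs <;> (try contradiction) <;> omega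

lemma rotInv_high (d t : ℕ) (h : d ≤ t) : rotInv d t = t := by
  simp only [rotInv]; split_ifs <;> (try contradiction) <;> omega

lemma rot_lt (d t : ℕ) : t < d ↔ rot d t < d := by
  simp only [rot]; split_ifs <;> (try contradiction) <;> omega

lemma rotInv_lt (d t : ℕ) : t < d ↔ rotInv d t < d := by
  simp only [rotInv]; split_ifs <;> (try contradiction) <;> omega

lemma rot_val_of_lt {d t : ℕ} (h : t + 1 < d) : rot d t = t + 1 := by simp [rot, h]

lemma rotInv_zero (d : ℕ) : rotInv d 0 = d - 1 := by simp [rotInv]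

lemma rotInv_val_of_lt {d t : ℕ} (h1 : t ≠ 0) (h2 : t < d) : rotInv d t = t - 1 := by
  simp [rotInv, h1, h2]

lemma IsPerm.comp {d : ℕ} {σ τ : ℕ → ℕ} (h : IsPerm d σ) (hb : Function.Bijective τ)
    (hfix : ∀ t, d ≤ t → τ t = t) : IsPerm d (σ ∘ τ) := by
  refine ⟨h.1.comp hb, fun t ht => ?_⟩
  simp only [Function.comp_apply, hfix t ht, h.2 t ht]

lemma swap_fix {i j d : ℕ} (hi : i < d) (hj : j < d) :
    ∀ t, d ≤ t → (Equiv.swap i j : Equiv.Perm ℕ) t = t := fun t ht =>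
  Equiv.swap_apply_of_ne_of_ne (by omega) (by omega)

/-! ### validPt stability under moves -/

lemma mv_self (c : ℕ) : mv c c = -1 := by simp [mv]

lemma mv_succ (c : ℕ) : mv c (c + 1) = 1 := by simp [mv]

lemma mv_other {c k : ℕ} (h1 : k ≠ c) (h2 : k ≠ c + 1) : mv c k = 0 := by
  simp [mv, h1, h2]

lemma validPt_add_mv {d N : ℕ} {v : ℕ → ℤ} (hv : validPt d N v) {c : ℕ} (hc : c < d)
    (hpos : 1 ≤ v c) : validPt d N (fun k => v k + mv c k) := by
  obtain ⟨h1, h2, h3⟩ := hv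
  refine ⟨fun k => ?_, fun k hk => ?_, ?_⟩
  · show 0 ≤ v k + mv c k
    rcases eq_or_ne k c with h | hkc
    · rw [h, mv_self]; have := hpos; omega
    · rcases eq_or_ne k (c+1) with rfl | hkc1
      · rw [mv_succ]; have := h1 (c+1); omega
      · rw [mv_other hkc hkc1]; have := h1 k; omega
  · show v k + mv c k = 0
    rw [mv_other (by omega) (by omega), h2 k hk]; ring
  · show ∑ k ∈ Finset.range (d+1), (v k + mv c k) = (N : ℤ)
    rw [Finset.sum_add_distrib, h3]
    have : ∑ k ∈ Finset.range (d+1), mv c k = 0 := by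
      simp only [mv, Finset.sum_sub_distrib]
      rw [Finset.sum_ite_eq' (Finset.range (d+1)) (c+1) (fun _ => (1:ℤ)),
        Finset.sum_ite_eq' (Finset.range (d+1)) c (fun _ => (1:ℤ))]
      simp [Finset.mem_range, Nat.lt_succ_iff, hc.le, hc]
    rw [this]; ring

lemma validPt_sub_mv {d N : ℕ} {v : ℕ → ℤ} (hv : validPt d N v) {c : ℕ} (hc : c < d)
    (hpos : 1 ≤ v (c + 1)) : validPt d N (fun k => v k - mv c k) := by
  obtain ⟨h1, h2, h3⟩ := hv
  refine ⟨fun k => ?_, fun k hk => ?_, ?_⟩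
  · show 0 ≤ v k - mv c k
    rcases eq_or_ne k c with h | hkc
    · rw [h, mv_self]; have := h1 c; have := hpos; omega
    · rcases eq_or_ne k (c+1) with rfl | hkc1
      · rw [mv_succ]; omega
      · rw [mv_other hkc hkc1]; have := h1 k; omega
  · show v k - mv c k = 0
    rw [mv_other (by omega) (by omega), h2 k hk]; ring
  · show ∑ k ∈ Finset.range (d+1), (v k - mv c k) = (N : ℤ)
    rw [Finset.sum_sub_distrib, h3]
    have : ∑ k ∈ Finset.range (d+1), mv c k = 0 := by
      simp only [mv, Finset.sum_sub_distrib]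
      rw [Finset.sum_ite_eq' (Finset.range (d+1)) (c+1) (fun _ => (1:ℤ)),
        Finset.sum_ite_eq' (Finset.range (d+1)) c (fun _ => (1:ℤ))]
      simp [Finset.mem_range, Nat.lt_succ_iff, hc.le, hc]
    rw [this]; ring

/-! ### facet identities -/

lemma vtx_comp_rot {d : ℕ} (C : Cell) {j : ℕ} (hj : j + 1 ≤ d) :
    vtx (fun k => C.1 k + mv (C.2 0) k, C.2 ∘ rot d) j = vtx C (j + 1) := by
  funext k
  simp only [vtx, Function.comp_apply]
  rw [Finset.sum_range_succ' (fun t => mv (C.2 t) k) j]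
  have : ∀ t ∈ Finset.range j, mv (C.2 (rot d t)) k = mv (C.2 (t+1)) k := by
    intro t ht
    rw [Finset.mem_range] at ht
    have : rot d t = t + 1 := rot_val_of_lt (by omega)
    rw [this]
  rw [Finset.sum_congr rfl this]
  ring

lemma vtx_comp_rotInv {d : ℕ} (C : Cell) (hd : 1 ≤ d) {j : ℕ} (hj : j + 1 ≤ d) :
    vtx (fun k => C.1 k - mv (C.2 (d-1)) k, C.2 ∘ rotInv d) (j + 1) = vtx C j := by
  funext k
  simp only [vtx, Function.comp_apply]
  rw [Finset.sum_range_succ' (fun t => mv (C.2 (rotInv d t)) k) j]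
  have h0 : rotInv d 0 = d - 1 := rotInv_zero d
  have : ∀ t ∈ Finset.range j, mv (C.2 (rotInv d (t+1))) k = mv (C.2 t) k := by
    intro t ht
    rw [Finset.mem_range] at ht
    have : rotInv d (t+1) = t := by rw [rotInv_val_of_lt (by omega) (by omega)]; omega
    rw [this]
  rw [Finset.sum_congr rfl this, h0]
  ring

lemma vtx_comp_swap_lt (C : Cell) {i' j : ℕ} (hj : j ≤ i') :
    vtx (C.1, C.2 ∘ (Equiv.swap i' (i'+1) : Equiv.Perm ℕ)) j = vtx C j := by
  funext k
  simp only [vtx, Function.comp_apply]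
  congr 1
  refine Finset.sum_congr rfl fun t ht => ?_
  rw [Finset.mem_range] at ht
  rw [Equiv.swap_apply_of_ne_of_ne (by omega) (by omega)]

lemma vtx_comp_swap_gt (C : Cell) {i' j : ℕ} (hj : i' + 2 ≤ j) :
    vtx (C.1, C.2 ∘ (Equiv.swap i' (i'+1) : Equiv.Perm ℕ)) j = vtx C j := by
  funext k
  simp only [vtx, Function.comp_apply]
  congr 1
  refine Finset.sum_equiv (Equiv.swap i' (i'+1)) (fun t => ?_) (fun t ht => rfl)
  simp only [Finset.mem_range]
  rcases eq_or_ne t i' with rfl | h1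
  · rw [Equiv.swap_apply_left]; omega
  rcases eq_or_ne t (i'+1) with rfl | h2
  · rw [Equiv.swap_apply_right]; omega
  · rw [Equiv.swap_apply_of_ne_of_ne h1 h2]

lemma vtx_comp_swap_mid (C : Cell) (i' : ℕ) :
    vtx (C.1, C.2 ∘ (Equiv.swap i' (i'+1) : Equiv.Perm ℕ)) (i' + 1)
      = fun k => vtx C i' k + mv (C.2 (i'+1)) k := by
  funext k
  simp only [vtx, Function.comp_apply]
  rw [Finset.sum_range_succ]
  have : ∀ t ∈ Finset.range i', mv (C.2 ((Equiv.swap i' (i'+1) : Equiv.Perm ℕ) t)) k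
      = mv (C.2 t) k := by
    intro t ht
    rw [Finset.mem_range] at ht
    rw [Equiv.swap_apply_of_ne_of_ne (by omega) (by omega)]
  rw [Finset.sum_congr rfl this, Equiv.swap_apply_left]
  ring


lemma vtx_zero (C : Cell) : vtx C 0 = C.1 := by
  funext k; simp [vtx]

/-! ### positivity lemmas for the new vertices of pivoted cells -/

lemma case0_pos {d N : ℕ} (hd : 1 ≤ d) {C : Cell} (hC : validCell d N C)
    (hwit : C.2 0 = 0 → ∃ j, j ≤ d ∧ j ≠ 0 ∧ 1 ≤ vtx C j 0) :
    1 ≤ vtx C d (C.2 0) := by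
  have hinj : Function.Injective C.2 := hC.1.1.1
  have hc' : C.2 0 < d := hC.1.lt (by omega)
  by_cases h0 : C.2 0 = 0
  · -- boundary-type case, use the witness
    obtain ⟨j, hj, hj0, hjpos⟩ := hwit h0
    have c1 : ¬ ∃ t, t < j ∧ C.2 t + 1 = 0 := by rintro ⟨t, -, ht⟩; omega
    have c2 : ∃ t, t < j ∧ C.2 t = 0 := ⟨0, by omega, h0⟩
    have c3 : ¬ ∃ t, t < d ∧ C.2 t + 1 = 0 := by rintro ⟨t, -, ht⟩; omega
    have c4 : ∃ t, t < d ∧ C.2 t = 0 := ⟨0, by omega, h0⟩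
    have e1 := vtx_coord C hinj j 0
    have e2 := vtx_coord C hinj d 0
    rw [if_neg c1, if_pos c2] at e1
    rw [if_neg c3, if_pos c4] at e2
    rw [h0, e2]
    rw [e1] at hjpos
    omega
  · -- interior case: the value is C.1 (C.2 0) which is ≥ 1
    have c1 : ¬ ∃ t, t < 1 ∧ C.2 t + 1 = C.2 0 := by
      rintro ⟨t, ht, h⟩
      have ht0 : t = 0 := by omega
      rw [ht0] at h
      omega
    have c2 : ∃ t, t < 1 ∧ C.2 t = C.2 0 := ⟨0, by omega, rfl⟩
    obtain ⟨t₁, ht₁, ht₁'⟩ := hC.1.exists_pos (show C.2 0 - 1 < d by omega)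
    have c3 : ∃ t, t < d ∧ C.2 t + 1 = C.2 0 := ⟨t₁, ht₁, by omega⟩
    have c4 : ∃ t, t < d ∧ C.2 t = C.2 0 := ⟨0, by omega, rfl⟩
    have hv1 : 0 ≤ vtx C 1 (C.2 0) := (hC.2 1 (by omega)).1 _
    have e1 := vtx_coord C hinj 1 (C.2 0)
    have e2 := vtx_coord C hinj d (C.2 0)
    rw [if_neg c1, if_pos c2] at e1
    rw [if_pos c3, if_pos c4] at e2
    omega

lemma cased_pos {d N : ℕ} (hd : 1 ≤ d) {C : Cell} (hC : validCell d N C)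
    (hnb : ¬(C.2 (d-1) = d-1 ∧ C.1 d = 0)) : 1 ≤ C.1 (C.2 (d-1) + 1) := by
  have hinj : Function.Injective C.2 := hC.1.1.1
  have hc' : C.2 (d-1) < d := hC.1.lt (by omega)
  have h0 : ∀ k, 0 ≤ C.1 k := by
    have := (hC.2 0 (by omega)).1
    rwa [vtx_zero] at this
  by_cases hlast : C.2 (d-1) = d - 1
  · have had : C.1 d ≠ 0 := fun h => hnb ⟨hlast, h⟩
    have : C.2 (d-1) + 1 = d := by omega
    rw [this]
    have := h0 d
    omega
  · -- interior: automatic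
    have hcd : C.2 (d-1) + 1 < d := by omega
    obtain ⟨t₁, ht₁, ht₁'⟩ := hC.1.exists_pos hcd
    have ht₁d : t₁ ≠ d - 1 := by
      intro h; rw [h] at ht₁'; omega
    have c1 : ¬ ∃ t, t < t₁ + 1 ∧ C.2 t + 1 = C.2 (d-1) + 1 := by
      rintro ⟨t, ht, h⟩
      have h' : C.2 t = C.2 (d-1) := by omega
      have := hinj h'
      omega
    have c2 : ∃ t, t < t₁ + 1 ∧ C.2 t = C.2 (d-1) + 1 := ⟨t₁, by omega, ht₁'⟩
    have hv : 0 ≤ vtx C (t₁ + 1) (C.2 (d-1) + 1) := (hC.2 (t₁+1) (by omega)).1 _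
    have e := vtx_coord C hinj (t₁ + 1) (C.2 (d-1) + 1)
    rw [if_neg c1, if_pos c2] at e
    omega

lemma mid_pos {d N : ℕ} {i' : ℕ} (hi : i' + 1 < d) {C : Cell} (hC : validCell d N C)
    (hwit : ∃ j, j ≤ d ∧ j ≠ i' + 1 ∧ 1 ≤ vtx C j (C.2 (i'+1))) :
    1 ≤ vtx C i' (C.2 (i'+1)) := by
  have hinj : Function.Injective C.2 := hC.1.1.1
  set c' := C.2 (i'+1) with hc'def
  have hc' : c' < d := hC.1.lt (by omega)
  have hpos2 : ∀ t, C.2 t = c' → t = i' + 1 := fun t h => hinj h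
  have ci2 : ¬ ∃ t, t < i' ∧ C.2 t = c' := by
    rintro ⟨t, ht, h⟩; have := hpos2 t h; omega
  have ei := vtx_coord C hinj i' c'
  rw [if_neg ci2] at ei
  by_cases hA : ∃ t, t < i' ∧ C.2 t + 1 = c'
  · -- then also the condition at i'+2 holds, and compare with vertex i'+2
    rw [if_pos hA] at ei
    obtain ⟨t₀, ht₀, ht₀'⟩ := hA
    have c21 : ∃ t, t < i' + 2 ∧ C.2 t + 1 = c' := ⟨t₀, by omega, ht₀'⟩
    have c22 : ∃ t, t < i' + 2 ∧ C.2 t = c' := ⟨i'+1, by omega, rfl⟩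
    have e2 := vtx_coord C hinj (i'+2) c'
    rw [if_pos c21, if_pos c22] at e2
    have hv : 0 ≤ vtx C (i'+2) c' := (hC.2 (i'+2) (by omega)).1 _
    omega
  · rw [if_neg hA] at ei
    -- vtx C i' c' = C.1 c'; show C.1 c' ≥ 1 by contradiction using the witness
    by_contra hcon
    push_neg at hcon
    have h0 : 0 ≤ C.1 c' := by
      have := (hC.2 0 (by omega)).1
      rw [vtx_zero] at this
      exact this c'
    have hC1 : C.1 c' = 0 := by omega
    -- determine the positions of moves c'-1, c'
    obtain ⟨j, hj, hji, hjpos⟩ := hwit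
    rcases Nat.lt_or_ge j (i'+1) with hlt | hge
    · -- j ≤ i'
      have cj1 : ¬ ∃ t, t < j ∧ C.2 t + 1 = c' := by
        rintro ⟨t, ht, h⟩
        exact hA ⟨t, by omega, h⟩
      have cj2 : ¬ ∃ t, t < j ∧ C.2 t = c' := by
        rintro ⟨t, ht, h⟩; have := hpos2 t h; omega
      have ej := vtx_coord C hinj j c'
      rw [if_neg cj1, if_neg cj2] at ej
      omega
    · -- j ≥ i'+2
      have hge2 : i' + 2 ≤ j := by omega
      -- condition 2 is true
      have cj2 : ∃ t, t < j ∧ C.2 t = c' := ⟨i'+1, by omega, rfl⟩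
      have ej := vtx_coord C hinj j c'
      by_cases cj1 : ∃ t, t < j ∧ C.2 t + 1 = c'
      · rw [if_pos cj1, if_pos cj2] at ej
        omega
      · rw [if_neg cj1, if_pos cj2] at ej
        omega

lemma vtx_comp_rot_last {d : ℕ} (C : Cell) :
    vtx (fun k => C.1 k + mv (C.2 0) k, C.2 ∘ rot d) d
      = fun k => vtx C d k + mv (C.2 0) k := by
  funext k
  simp only [vtx, Function.comp_apply]
  have : ∑ t ∈ Finset.range d, mv (C.2 (rot d t)) k = ∑ t ∈ Finset.range d, mv (C.2 t) k := by
    refine Finset.sum_bijective (rot d) (rot_bij d) (fun t => ?_) (fun t _ => rfl)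
    simp only [Finset.mem_range]
    exact rot_lt d t
  rw [this]; ring

/-! ### the pivot map -/

def pivot (d : ℕ) (p : Cell × ℕ) : Cell × ℕ :=
  if p.2 = 0 then ((fun k => p.1.1 k + mv (p.1.2 0) k, p.1.2 ∘ rot d), d)
  else if p.2 = d then ((fun k => p.1.1 k - mv (p.1.2 (d-1)) k, p.1.2 ∘ rotInv d), 0)
  else ((p.1.1, p.1.2 ∘ (Equiv.swap (p.2 - 1) p.2 : Equiv.Perm ℕ)), p.2)

lemma pivot_zero (d : ℕ) (C : Cell) :
    pivot d (C, 0) = ((fun k => C.1 k + mv (C.2 0) k, C.2 ∘ rot d), d) := by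
  simp [pivot]

lemma pivot_last (d : ℕ) (hd : d ≠ 0) (C : Cell) :
    pivot d (C, d) = ((fun k => C.1 k - mv (C.2 (d-1)) k, C.2 ∘ rotInv d), 0) := by
  simp [pivot, hd]

lemma pivot_mid (d : ℕ) {i' : ℕ} (hd : i' + 1 ≠ d) (C : Cell) :
    pivot d (C, i' + 1) = ((C.1, C.2 ∘ (Equiv.swap i' (i'+1) : Equiv.Perm ℕ)), i' + 1) := by
  have h1 : i' + 1 - 1 = i' := by omega
  simp [pivot, hd, h1]

theorem pivot_spec (d N : ℕ) (hd : 1 ≤ d) (L : (ℕ → ℤ) → ℕ)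
    (hL : ∀ v, validPt d N v → L v ≤ d ∧ 1 ≤ v (L v))
    {C : Cell} {i : ℕ} (hdoor : isDoor d N L C i)
    (hnb : ¬(i = d ∧ C.2 (d-1) = d-1 ∧ C.1 d = 0)) :
    isDoor d N L (pivot d (C, i)).1 (pivot d (C, i)).2 ∧
    pivot d (pivot d (C, i)) = (C, i) ∧
    pivot d (C, i) ≠ (C, i) ∧
    ¬((pivot d (C, i)).2 = d ∧ (pivot d (C, i)).1.2 (d-1) = d-1 ∧ (pivot d (C, i)).1.1 d = 0) := by
  obtain ⟨hC, hi, hlab⟩ := hdoor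
  have hinj : Function.Injective C.2 := hC.1.1.1
  by_cases h0 : i = 0
  · -- case i = 0
    subst h0
    rw [pivot_zero]
    set C' : Cell := (fun k => C.1 k + mv (C.2 0) k, C.2 ∘ rot d) with hC'def
    have hfacet : ∀ j, j + 1 ≤ d → vtx C' j = vtx C (j+1) := fun j hj => vtx_comp_rot C hj
    have hlast : vtx C' d = fun k => vtx C d k + mv (C.2 0) k := vtx_comp_rot_last C
    have hperm' : IsPerm d C'.2 := hC.1.comp (rot_bij d) (rot_high d)
    have hpos : 1 ≤ vtx C d (C.2 0) := by
      refine case0_pos hd hC (fun h00 => ?_)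
      obtain ⟨j, hj, hji, hLj⟩ := hlab 0 (by omega)
      refine ⟨j, hj, hji, ?_⟩
      have := (hL _ (hC.2 j hj)).2
      rwa [hLj] at this
    have hvalid' : validCell d N C' := by
      refine ⟨hperm', fun j hj => ?_⟩
      by_cases hjd : j = d
      · rw [hjd, hlast]
        exact validPt_add_mv (hC.2 d le_rfl) (hC.1.lt (by omega)) hpos
      · rw [hfacet j (by omega)]
        exact hC.2 (j+1) (by omega)
    have hc2 : C'.2 (d-1) = C.2 0 := by
      show C.2 (rot d (d-1)) = C.2 0
      have : rot d (d-1) = 0 := by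
        simp only [rot]; split_ifs <;> omega
      rw [this]
    refine ⟨⟨hvalid', le_rfl, fun k hk => ?_⟩, ?_, ?_, ?_⟩
    · obtain ⟨j, hj, hj0, hLj⟩ := hlab k hk
      refine ⟨j - 1, by omega, by omega, ?_⟩
      rw [hfacet (j-1) (by omega)]
      have hj1 : j - 1 + 1 = j := by omega
      rw [hj1]
      exact hLj
    · rw [pivot_last d (by omega)]
      refine Prod.ext (Prod.ext ?_ ?_) rfl
      · funext k
        show C'.1 k - mv (C'.2 (d-1)) k = C.1 k
        rw [hc2]
        show C.1 k + mv (C.2 0) k - mv (C.2 0) k = C.1 k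
        ring
      · funext t
        show C.2 (rot d (rotInv d t)) = C.2 t
        rw [rot_rotInv]
    · intro h
      have := congrArg Prod.snd h
      simp only at this
      omega
    · rintro ⟨-, h1, h2⟩
      rw [hc2] at h1
      have hmv : mv (C.2 0) d = 1 := by
        rw [h1]
        have : d - 1 + 1 = d := by omega
        rw [← this]
        exact mv_succ (d-1)
      have ha : 0 ≤ C.1 d := by
        have := (hC.2 0 (by omega)).1
        rw [vtx_zero] at this
        exact this d
      have : C'.1 d = C.1 d + mv (C.2 0) d := rfl
      rw [this, hmv] at h2
      omega
  · by_cases hdd : i = d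
    · -- case i = d
      rw [hdd] at hi hlab hnb ⊢
      rw [pivot_last d (by omega)]
      set C' : Cell := (fun k => C.1 k - mv (C.2 (d-1)) k, C.2 ∘ rotInv d) with hC'def
      have hfacet : ∀ j, j + 1 ≤ d → vtx C' (j+1) = vtx C j := fun j hj =>
        vtx_comp_rotInv C hd hj
      have hperm' : IsPerm d C'.2 := hC.1.comp (rotInv_bij d) (rotInv_high d)
      have hnb' : ¬(C.2 (d-1) = d-1 ∧ C.1 d = 0) := fun hh => hnb ⟨rfl, hh.1, hh.2⟩
      have hpos : 1 ≤ C.1 (C.2 (d-1) + 1) := cased_pos hd hC hnb'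
      have hvalid0 : validPt d N C.1 := by
        have := hC.2 0 (by omega)
        rwa [vtx_zero] at this
      have hvalid' : validCell d N C' := by
        refine ⟨hperm', fun j hj => ?_⟩
        by_cases hj0 : j = 0
        · subst hj0
          rw [vtx_zero]
          exact validPt_sub_mv hvalid0 (hC.1.lt (by omega)) hpos
        · obtain ⟨j', rfl⟩ : ∃ j', j = j' + 1 := ⟨j - 1, by omega⟩
          rw [hfacet j' (by omega)]
          exact hC.2 j' (by omega)
      have hc2 : C'.2 0 = C.2 (d-1) := by
        show C.2 (rotInv d 0) = C.2 (d-1)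
        rw [rotInv_zero]
      refine ⟨⟨hvalid', by omega, fun k hk => ?_⟩, ?_, ?_, ?_⟩
      · obtain ⟨j, hj, hjd, hLj⟩ := hlab k hk
        refine ⟨j + 1, by omega, by omega, ?_⟩
        rw [hfacet j (by omega)]
        exact hLj
      · rw [pivot_zero]
        refine Prod.ext (Prod.ext ?_ ?_) rfl
        · funext k
          show C'.1 k + mv (C'.2 0) k = C.1 k
          rw [hc2]
          show C.1 k - mv (C.2 (d-1)) k + mv (C.2 (d-1)) k = C.1 k
          ring
        · funext t
          show C.2 (rotInv d (rot d t)) = C.2 t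
          rw [rotInv_rot]
      · intro h
        have := congrArg Prod.snd h
        simp only at this
        omega
      · rintro ⟨h, -, -⟩
        omega
    · -- middle case
      obtain ⟨i', rfl⟩ : ∃ i', i = i' + 1 := ⟨i - 1, by omega⟩
      have hilt : i' + 1 < d := by omega
      rw [pivot_mid d hdd]
      set C' : Cell := (C.1, C.2 ∘ (Equiv.swap i' (i'+1) : Equiv.Perm ℕ)) with hC'def
      have hperm' : IsPerm d C'.2 :=
        hC.1.comp (Equiv.swap i' (i'+1)).bijective (swap_fix (by omega) hilt)
      have hmid : vtx C' (i'+1) = fun k => vtx C i' k + mv (C.2 (i'+1)) k :=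
        vtx_comp_swap_mid C i'
      have hpos : 1 ≤ vtx C i' (C.2 (i'+1)) := by
        refine mid_pos hilt hC ?_
        obtain ⟨j, hj, hji, hLj⟩ := hlab (C.2 (i'+1)) (hC.1.lt hilt)
        refine ⟨j, hj, hji, ?_⟩
        have := (hL _ (hC.2 j hj)).2
        rwa [hLj] at this
      have hvalid' : validCell d N C' := by
        refine ⟨hperm', fun j hj => ?_⟩
        rcases Nat.lt_trichotomy j (i'+1) with h | h | h
        · rw [vtx_comp_swap_lt C (by omega : j ≤ i')]
          exact hC.2 j hj
        · rw [h, hmid]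
          exact validPt_add_mv (hC.2 i' (by omega)) (hC.1.lt hilt) hpos
        · rw [vtx_comp_swap_gt C (by omega : i' + 2 ≤ j)]
          exact hC.2 j hj
      refine ⟨⟨hvalid', by omega, fun k hk => ?_⟩, ?_, ?_, ?_⟩
      · obtain ⟨j, hj, hji, hLj⟩ := hlab k hk
        refine ⟨j, hj, hji, ?_⟩
        rcases Nat.lt_trichotomy j (i'+1) with h | h | h
        · rw [vtx_comp_swap_lt C (by omega : j ≤ i')]
          exact hLj
        · omega
        · rw [vtx_comp_swap_gt C (by omega : i' + 2 ≤ j)]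
          exact hLj
      · rw [pivot_mid d hdd]
        refine Prod.ext (Prod.ext rfl ?_) rfl
        funext t
        show C.2 ((Equiv.swap i' (i'+1)) ((Equiv.swap i' (i'+1)) t)) = C.2 t
        rw [Equiv.swap_apply_self]
      · intro h
        have h2 := congrArg (fun p => p.1.2 i') h
        simp only at h2
        have : C.2 ((Equiv.swap i' (i'+1)) i') = C.2 i' := h2
        rw [Equiv.swap_apply_left] at this
        have := hinj this
        omega
      · rintro ⟨h, -, -⟩
        simp only at h
        omega

/-! ### enumeration finsets -/

def ptsFin (d N : ℕ) : Finset (ℕ → ℤ) :=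
  Finset.image (fun g : Fin (d+1) → Fin (N+1) =>
    (fun k => if h : k < d + 1 then ((g ⟨k, h⟩ : ℕ) : ℤ) else 0)) Finset.univ

def permsFin (d : ℕ) : Finset (ℕ → ℕ) :=
  Finset.image (fun g : Fin d ≃ Fin d =>
    (fun t => if h : t < d then ((g ⟨t, h⟩ : ℕ) : ℕ) else t)) Finset.univ

def cellsFin (d N : ℕ) : Finset Cell := (ptsFin d N) ×ˢ (permsFin d)

lemma mem_ptsFin {d N : ℕ} {v : ℕ → ℤ} (h : validPt d N v) : v ∈ ptsFin d N := by
  have hub : ∀ k, k < d + 1 → v k ≤ N := by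
    intro k hk
    calc v k ≤ ∑ j ∈ Finset.range (d+1), v j :=
          Finset.single_le_sum (fun j _ => h.1 j) (Finset.mem_range.mpr hk)
    _ = (N : ℤ) := h.2.2
  have hgk : ∀ k : Fin (d+1), (v (k : ℕ)).toNat < N + 1 := by
    intro k
    have h1 := h.1 (k : ℕ)
    have h2 := hub (k : ℕ) k.2
    omega
  refine Finset.mem_image.mpr ⟨fun k => ⟨(v (k : ℕ)).toNat, hgk k⟩, Finset.mem_univ _, ?_⟩
  funext k
  by_cases hk : k < d + 1
  · rw [dif_pos hk]
    simp only []
    rw [Int.toNat_of_nonneg (h.1 k)]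
  · rw [dif_neg hk]
    exact (h.2.1 k (by omega)).symm

lemma mem_permsFin {d : ℕ} {σ : ℕ → ℕ} (h : IsPerm d σ) : σ ∈ permsFin d := by
  have hg : ∀ t : Fin d, σ (t : ℕ) < d := fun t => h.lt t.2
  set g : Fin d → Fin d := fun t => ⟨σ (t : ℕ), hg t⟩ with hgdef
  have hginj : Function.Injective g := by
    intro a b hab
    have : σ (a : ℕ) = σ (b : ℕ) := congrArg Fin.val hab
    exact Fin.ext (h.1.1 this)
  have hgbij : Function.Bijective g := Finite.injective_iff_bijective.mp hginj
  refine Finset.mem_image.mpr ⟨Equiv.ofBijective g hgbij, Finset.mem_univ _, ?_⟩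
  funext t
  by_cases ht : t < d
  · rw [dif_pos ht]
    rfl
  · rw [dif_neg ht]
    exact (h.2 t (by omega)).symm

lemma mem_cellsFin {d N : ℕ} {C : Cell} (h : validCell d N C) : C ∈ cellsFin d N := by
  refine Finset.mem_product.mpr ⟨?_, mem_permsFin h.1⟩
  have := h.2 0 (by omega)
  rw [vtx_zero] at this
  exact mem_ptsFin this

/-! ### counting doors of a fixed cell -/

theorem doors_card (d N : ℕ) (L : (ℕ → ℤ) → ℕ)
    (hL : ∀ v, validPt d N v → L v ≤ d ∧ 1 ≤ v (L v)) {C : Cell} (hC : validCell d N C) :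
    ((Finset.range (d+1)).filter (fun i => isDoor d N L C i)).card % 2
      = if isFull d N L C then 1 else 0 := by
  have hlab_le : ∀ j, j ≤ d → L (vtx C j) ≤ d := fun j hj => (hL _ (hC.2 j hj)).1
  by_cases hfull : isFull d N L C
  · rw [if_pos hfull]
    obtain ⟨i₀, hi₀, hlabi₀⟩ := hfull.2 d le_rfl
    have hset : (Finset.range (d+1)).filter (fun i => isDoor d N L C i) = {i₀} := by
      apply Finset.eq_singleton_iff_unique_mem.mpr
      constructor
      · refine Finset.mem_filter.mpr ⟨Finset.mem_range.mpr (by omega), hC, hi₀, ?_⟩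
        intro k hk
        obtain ⟨j, hj, hlj⟩ := hfull.2 k (by omega)
        refine ⟨j, hj, ?_, hlj⟩
        intro hji
        rw [hji, hlabi₀] at hlj
        omega
      · intro i hi'
        obtain ⟨hirange, -, hile, hidoor⟩ := Finset.mem_filter.mp hi'
        by_contra hne
        set W : ℕ → ℕ := fun k => if hk : k < d then (hidoor k hk).choose else 0 with hWdef
        have hWs : ∀ k, k < d → W k ≤ d ∧ W k ≠ i ∧ L (vtx C (W k)) = k := by
          intro k hk
          rw [hWdef]
          simp only [dif_pos hk]
          exact (hidoor k hk).choose_spec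
        have hWne : ∀ k, k < d → W k ≠ i₀ := by
          intro k hk hWk
          have h2 := (hWs k hk).2.2
          rw [hWk, hlabi₀] at h2
          omega
        have himg : (Finset.range d).image W ⊆ ((Finset.range (d+1)).erase i).erase i₀ := by
          intro x hx
          obtain ⟨k, hk, hWk⟩ := Finset.mem_image.mp hx
          rw [Finset.mem_range] at hk
          subst hWk
          refine Finset.mem_erase.mpr ⟨hWne k hk, Finset.mem_erase.mpr
            ⟨(hWs k hk).2.1, Finset.mem_range.mpr (by have := (hWs k hk).1; omega)⟩⟩
        have hcard : ((Finset.range d).image W).card = d := by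
          rw [Finset.card_image_of_injOn, Finset.card_range]
          intro k₁ h₁ k₂ h₂ he
          rw [Finset.mem_coe, Finset.mem_range] at h₁ h₂
          have e₁ := (hWs k₁ h₁).2.2
          have e₂ := (hWs k₂ h₂).2.2
          rw [he] at e₁
          rw [e₁] at e₂
          omega
        have hle := Finset.card_le_card himg
        have hi₀i : i₀ ≠ i := fun he => hne he.symm
        have hce : (((Finset.range (d+1)).erase i).erase i₀).card = d - 1 := by
          rw [Finset.card_erase_of_mem
              (Finset.mem_erase.mpr ⟨hi₀i, Finset.mem_range.mpr (by omega)⟩),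
            Finset.card_erase_of_mem hirange, Finset.card_range]
          omega
        rw [hcard, hce] at hle
        have hd0 : d = 0 := by omega
        apply hne
        omega
    rw [hset]
    rfl
  · rw [if_neg hfull]
    rcases Finset.eq_empty_or_nonempty
      ((Finset.range (d+1)).filter (fun i => isDoor d N L C i)) with he | ⟨i, hi'⟩
    · rw [he]; rfl
    · obtain ⟨hirange, -, hile, hidoor⟩ := Finset.mem_filter.mp hi'
      have hirange' : i < d + 1 := Finset.mem_range.mp hirange
      set W : ℕ → ℕ := fun k => if hk : k < d then (hidoor k hk).choose else 0 with hWdef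
      have hWs : ∀ k, k < d → W k ≤ d ∧ W k ≠ i ∧ L (vtx C (W k)) = k := by
        intro k hk
        rw [hWdef]
        simp only [dif_pos hk]
        exact (hidoor k hk).choose_spec
      have hWinj : ∀ k₁, k₁ < d → ∀ k₂, k₂ < d → W k₁ = W k₂ → k₁ = k₂ := by
        intro k₁ h₁ k₂ h₂ he
        have e₁ := (hWs k₁ h₁).2.2
        have e₂ := (hWs k₂ h₂).2.2
        rw [he] at e₁
        rw [e₁] at e₂
        omega
      have himg : (Finset.range d).image W = (Finset.range (d+1)).erase i := by
        apply Finset.eq_of_subset_of_card_le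
        · intro x hx
          obtain ⟨k, hk, hWk⟩ := Finset.mem_image.mp hx
          rw [Finset.mem_range] at hk
          subst hWk
          exact Finset.mem_erase.mpr ⟨(hWs k hk).2.1,
            Finset.mem_range.mpr (by have := (hWs k hk).1; omega)⟩
        · rw [Finset.card_erase_of_mem hirange, Finset.card_range]
          rw [Finset.card_image_of_injOn, Finset.card_range]
          · omega
          · intro k₁ h₁ k₂ h₂ he
            rw [Finset.mem_coe, Finset.mem_range] at h₁ h₂
            exact hWinj k₁ h₁ k₂ h₂ he
      have hmem_inv : ∀ j, j ≤ d → j ≠ i → ∃ k, k < d ∧ W k = j := by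
        intro j hj hji
        have hmem : j ∈ (Finset.range (d+1)).erase i :=
          Finset.mem_erase.mpr ⟨hji, Finset.mem_range.mpr (by omega)⟩
        rw [← himg] at hmem
        obtain ⟨k, hk, hWk⟩ := Finset.mem_image.mp hmem
        exact ⟨k, Finset.mem_range.mp hk, hWk⟩
      have hlabInj : ∀ j₁, j₁ ≤ d → j₁ ≠ i → ∀ j₂, j₂ ≤ d → j₂ ≠ i →
          L (vtx C j₁) = L (vtx C j₂) → j₁ = j₂ := by
        intro j₁ h₁ h₁' j₂ h₂ h₂' he
        obtain ⟨k₁, hk₁, hWk₁⟩ := hmem_inv j₁ h₁ h₁'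
        obtain ⟨k₂, hk₂, hWk₂⟩ := hmem_inv j₂ h₂ h₂'
        rw [← hWk₁, ← hWk₂] at he ⊢
        rw [(hWs k₁ hk₁).2.2, (hWs k₂ hk₂).2.2] at he
        rw [he]
      have hlabi : L (vtx C i) < d := by
        rcases Nat.lt_or_ge (L (vtx C i)) d with h | h
        · exact h
        · exfalso
          apply hfull
          refine ⟨hC, fun k hk => ?_⟩
          rcases Nat.lt_or_ge k d with hkd | hkd
          · exact ⟨W k, (hWs k hkd).1, (hWs k hkd).2.2⟩
          · have hkd' : k = d := by omega
            have hlid : L (vtx C i) = d := by have := hlab_le i hile; omega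
            exact ⟨i, hile, by rw [hlid, hkd']⟩
      -- j* := W (L (vtx C i))
      set js : ℕ := W (L (vtx C i)) with hjsdef
      have hjs := hWs _ hlabi
      have hjsi : js ≠ i := hjs.2.1
      have hjslab : L (vtx C js) = L (vtx C i) := hjs.2.2
      have hset : (Finset.range (d+1)).filter (fun i => isDoor d N L C i) = {i, js} := by
        apply Finset.Subset.antisymm
        · intro i' hi''
          obtain ⟨hi'range, -, hi'le, hi'door⟩ := Finset.mem_filter.mp hi''
          simp only [Finset.mem_insert, Finset.mem_singleton]
          by_contra hcon
          push_neg at hcon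
          obtain ⟨hii, hijs⟩ := hcon
          -- i' ≠ i, i' ≠ js; apply its door property at k := L (vtx C i')
          have hlabi' : L (vtx C i') < d := by
            obtain ⟨k, hk, hWk⟩ := hmem_inv i' hi'le hii
            rw [← hWk, (hWs k hk).2.2]
            exact hk
          obtain ⟨j', hj', hj'i', hj'lab⟩ := hi'door (L (vtx C i')) hlabi'
          rcases eq_or_ne j' i with rfl | hj'i
          · -- j' = i : then L (vtx C i) = L (vtx C i'), so js = i' by hlabInj
            apply hijs
            refine (hlabInj js hjs.1 hjsi i' hi'le hii ?_).symm
            rw [hjslab, hj'lab]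
          · exact hj'i' (hlabInj j' hj' hj'i i' hi'le hii hj'lab)
        · intro x hx
          simp only [Finset.mem_insert, Finset.mem_singleton] at hx
          rcases hx with rfl | rfl
          · exact hi'
          · refine Finset.mem_filter.mpr ⟨Finset.mem_range.mpr (by have := hjs.1; omega),
              hC, hjs.1, ?_⟩
            intro k hk
            rcases eq_or_ne k (L (vtx C i)) with rfl | hki
            · exact ⟨i, hile, fun h => hjsi h.symm, rfl⟩
            · refine ⟨W k, (hWs k hk).1, ?_, (hWs k hk).2.2⟩
              intro hWkjs
              apply hki
              have := (hWs k hk).2.2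
              rw [hWkjs, hjslab] at this
              omega
      rw [hset, Finset.card_insert_of_notMem (by simp [Ne.symm hjsi]), Finset.card_singleton]

lemma zmod_two_iff (n : ℕ) : (n : ZMod 2) = 1 ↔ n % 2 = 1 := by
  constructor
  · intro h
    rcases Nat.mod_two_eq_zero_or_one n with h0 | h1
    · exfalso
      have := ZMod.natCast_mod n 2
      rw [h0] at this
      rw [← this] at h
      simp at h
    · exact h1
  · intro h
    have := ZMod.natCast_mod n 2
    rw [h] at this
    rw [← this]
    simp

/-! ### the main parity theorem -/

theorem sperner_odd (N : ℕ) : ∀ (d : ℕ) (L : (ℕ → ℤ) → ℕ),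
    (∀ v, validPt d N v → L v ≤ d ∧ 1 ≤ v (L v)) →
    ((cellsFin d N).filter (isFull d N L)).card % 2 = 1 := by
  intro d
  induction d with
  | zero =>
    intro L hL
    set v₀ : ℕ → ℤ := fun k => if k = 0 then (N:ℤ) else 0 with hv₀def
    set C₀ : Cell := (v₀, fun t => t) with hC₀def
    have hv₀ : validPt 0 N v₀ := by
      refine ⟨fun k => ?_, fun k hk => ?_, ?_⟩
      · show 0 ≤ if k = 0 then (N:ℤ) else 0
        split_ifs <;> simp
      · show (if k = 0 then (N:ℤ) else 0) = 0
        rw [if_neg (by omega)]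
      · rw [Finset.sum_range_one]
        show (if (0:ℕ) = 0 then (N:ℤ) else 0) = N
        rw [if_pos rfl]
    have hperm₀ : IsPerm 0 (C₀.2) := ⟨Function.bijective_id, fun t _ => rfl⟩
    have hvalid₀ : validCell 0 N C₀ := by
      refine ⟨hperm₀, fun i hi => ?_⟩
      have : i = 0 := by omega
      rw [this, vtx_zero]
      exact hv₀
    have hfull₀ : isFull 0 N L C₀ := by
      refine ⟨hvalid₀, fun k hk => ⟨0, le_rfl, ?_⟩⟩
      have h1 : L (vtx C₀ 0) ≤ 0 := by
        rw [vtx_zero]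
        exact (hL v₀ hv₀).1
      omega
    have hset : (cellsFin 0 N).filter (isFull 0 N L) = {C₀} := by
      apply Finset.eq_singleton_iff_unique_mem.mpr
      refine ⟨Finset.mem_filter.mpr ⟨mem_cellsFin hvalid₀, hfull₀⟩, ?_⟩
      intro C hc
      have hfC : isFull 0 N L C := (Finset.mem_filter.mp hc).2
      have hvC : validCell 0 N C := hfC.1
      have hpt : validPt 0 N C.1 := by
        have := hvC.2 0 le_rfl
        rwa [vtx_zero] at this
      have h1 : C.1 = v₀ := by
        funext k
        rcases eq_or_ne k 0 with rfl | hk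
        · have := hpt.2.2
          rw [Finset.sum_range_one] at this
          rw [hv₀def]
          simp only [if_pos rfl]
          exact this
        · rw [hv₀def]
          simp only [if_neg hk]
          exact hpt.2.1 k (by omega)
      have h2 : C.2 = (fun t => t) := funext fun t => hvC.1.2 t (by omega)
      rw [hC₀def, ← h1, ← h2]
    rw [hset]
    rfl
  | succ d ih =>
    intro L hL
    -- derived labelling hypothesis for dimension d
    have hL' : ∀ v, validPt d N v → L v ≤ d ∧ 1 ≤ v (L v) := by
      intro v hv
      have hv' : validPt (d+1) N v := by
        refine ⟨hv.1, fun k hk => hv.2.1 k (by omega), ?_⟩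
        rw [Finset.sum_range_succ, hv.2.2, hv.2.1 (d+1) (by omega)]
        ring
      obtain ⟨h1, h2⟩ := hL v hv'
      refine ⟨?_, h2⟩
      rcases Nat.lt_or_ge (L v) (d+1) with h | h
      · omega
      · exfalso
        have : v (L v) = 0 := hv.2.1 (L v) (by omega)
        omega
    classical
    set T : Finset (Cell × ℕ) :=
      ((cellsFin (d+1) N) ×ˢ (Finset.range (d+2))).filter
        (fun p => isDoor (d+1) N L p.1 p.2) with hTdef
    -- Step 1: |T| ≡ #full cells (mod 2)
    have hT' : T.card = ∑ C ∈ cellsFin (d+1) N,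
        ((Finset.range (d+2)).filter (fun i => isDoor (d+1) N L C i)).card := by
      rw [hTdef, Finset.card_filter, Finset.sum_product]
      exact Finset.sum_congr rfl (fun C _ => (Finset.card_filter _ _).symm)
    have step1 : (T.card : ZMod 2)
        = (((cellsFin (d+1) N).filter (isFull (d+1) N L)).card : ZMod 2) := by
      rw [hT', Nat.cast_sum]
      have hcell : ∀ C ∈ cellsFin (d+1) N,
          ((((Finset.range (d+2)).filter (fun i => isDoor (d+1) N L C i)).card : ℕ) : ZMod 2)
            = if isFull (d+1) N L C then (1 : ZMod 2) else 0 := by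
        intro C _
        by_cases hv : validCell (d+1) N C
        · have hd := doors_card (d+1) N L hL hv
          rw [← ZMod.natCast_mod _ 2, hd]
          split_ifs <;> simp
        · have he : (Finset.range (d+2)).filter (fun i => isDoor (d+1) N L C i) = ∅ := by
            apply Finset.filter_eq_empty_iff.mpr
            intro i _ hdoor
            exact hv hdoor.1
          have hnf : ¬ isFull (d+1) N L C := fun hf => hv hf.1
          rw [he, if_neg hnf]
          rfl
      rw [Finset.sum_congr rfl hcell, Finset.sum_boole]
    -- Step 2: pivot involution kills the non-boundary doors
    have key : ∀ p ∈ T.filter (fun p => ¬ (p.2 = d + 1 ∧ p.1.2 d = d ∧ p.1.1 (d+1) = 0)),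
        pivot (d+1) p ∈ T.filter (fun p => ¬ (p.2 = d + 1 ∧ p.1.2 d = d ∧ p.1.1 (d+1) = 0)) ∧
        pivot (d+1) (pivot (d+1) p) = p ∧ pivot (d+1) p ≠ p := by
      intro p hp
      obtain ⟨hpT, hpnb⟩ := Finset.mem_filter.mp hp
      obtain ⟨hpmem, hpdoor⟩ := Finset.mem_filter.mp hpT
      have hnb' : ¬(p.2 = d + 1 ∧ p.1.2 (d+1-1) = d+1-1 ∧ p.1.1 (d+1) = 0) := by
        simpa only [Nat.add_sub_cancel] using hpnb
      have hspec := pivot_spec (d+1) N (by omega) L hL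
        (C := p.1) (i := p.2) hpdoor hnb'
      have hPiv : pivot (d+1) (p.1, p.2) = pivot (d+1) p := by rw [Prod.mk.eta]
      rw [hPiv] at hspec
      refine ⟨?_, hspec.2.1, hspec.2.2.1⟩
      refine Finset.mem_filter.mpr ⟨Finset.mem_filter.mpr
        ⟨Finset.mem_product.mpr ⟨mem_cellsFin hspec.1.1, Finset.mem_range.mpr
          (by have := hspec.1.2.1; omega)⟩, hspec.1⟩, ?_⟩
      have := hspec.2.2.2
      simpa only [Nat.add_sub_cancel] using this
    have heven : ((T.filter (fun p => ¬ (p.2 = d + 1 ∧ p.1.2 d = d ∧ p.1.1 (d+1) = 0))).card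
        : ZMod 2) = 0 := by
      rw [Finset.card_eq_sum_ones, Nat.cast_sum]
      refine Finset.sum_involution (fun p _ => pivot (d+1) p) (fun p _ => by decide)
        (fun p hp _ => (key p hp).2.2) (fun p hp => (key p hp).1) (fun p hp => (key p hp).2.1)
    have hsplit := Finset.card_filter_add_card_filter_not
      (s := T) (p := fun p => p.2 = d + 1 ∧ p.1.2 d = d ∧ p.1.1 (d+1) = 0)
    have step2 : (T.card : ZMod 2)
        = ((T.filter (fun p => p.2 = d + 1 ∧ p.1.2 d = d ∧ p.1.1 (d+1) = 0)).card : ZMod 2) := by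
      rw [← hsplit]
      push_cast
      rw [heven]
      ring
    -- Step 3: boundary doors are exactly the full cells one dimension down
    have fwd : ∀ p ∈ T.filter (fun p => p.2 = d + 1 ∧ p.1.2 d = d ∧ p.1.1 (d+1) = 0),
        p.1 ∈ (cellsFin d N).filter (isFull d N L) := by
      intro p hp
      obtain ⟨hpT, hp2eq, hσd, had⟩ := Finset.mem_filter.mp hp
      obtain ⟨-, hpdoor⟩ := Finset.mem_filter.mp hpT
      set C : Cell := p.1 with hCdef
      rw [hp2eq] at hpdoor
      have hvC : validCell (d+1) N C := hpdoor.1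
      have hinj : Function.Injective C.2 := hvC.1.1.1
      have hpermd : IsPerm d C.2 := by
        refine ⟨hvC.1.1, fun t ht => ?_⟩
        rcases eq_or_ne t d with rfl | htd
        · exact hσd
        · exact hvC.1.2 t (by omega)
      have hz : ∀ j, j ≤ d → vtx C j (d+1) = 0 := by
        intro j hj
        have c1 : ¬ ∃ t, t < j ∧ C.2 t + 1 = d + 1 := by
          rintro ⟨t, ht, h⟩
          have h' : C.2 t = C.2 d := by rw [hσd]; omega
          have := hinj h'
          omega
        have c2 : ¬ ∃ t, t < j ∧ C.2 t = d + 1 := by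
          rintro ⟨t, ht, h⟩
          have := hvC.1.lt (show t < d + 1 by omega)
          omega
        have e := vtx_coord C hinj j (d+1)
        rw [if_neg c1, if_neg c2] at e
        rw [e, had]
        ring
      have hvpt : ∀ j, j ≤ d → validPt d N (vtx C j) := by
        intro j hj
        obtain ⟨o1, o2, o3⟩ := hvC.2 j (by omega)
        refine ⟨o1, fun k hk => ?_, ?_⟩
        · rcases eq_or_ne k (d+1) with rfl | hk1
          · exact hz j hj
          · exact o2 k (by omega)
        · rw [Finset.sum_range_succ, hz j hj] at o3
          rw [← o3]
          ring
      refine Finset.mem_filter.mpr ⟨mem_cellsFin ⟨hpermd, hvpt⟩, ⟨hpermd, hvpt⟩, ?_⟩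
      intro k hk
      obtain ⟨j, hj, hjne, hlab⟩ := hpdoor.2.2 k (by omega)
      exact ⟨j, by omega, hlab⟩
    have bwd : ∀ C ∈ (cellsFin d N).filter (isFull d N L),
        (C, d+1) ∈ T.filter (fun p => p.2 = d + 1 ∧ p.1.2 d = d ∧ p.1.1 (d+1) = 0) := by
      intro C hC
      have hfull : isFull d N L C := (Finset.mem_filter.mp hC).2
      have hv : validCell d N C := hfull.1
      have hinj : Function.Injective C.2 := hv.1.1.1
      have hσd : C.2 d = d := hv.1.2 d le_rfl
      have had : C.1 (d+1) = 0 := by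
        have h := hv.2 0 (by omega)
        rw [vtx_zero] at h
        exact h.2.1 (d+1) (by omega)
      have hz : ∀ j, j ≤ d → vtx C j (d+1) = 0 := by
        intro j hj
        have c1 : ¬ ∃ t, t < j ∧ C.2 t + 1 = d + 1 := by
          rintro ⟨t, ht, h⟩
          have := hv.1.lt (show t < d by omega)
          omega
        have c2 : ¬ ∃ t, t < j ∧ C.2 t = d + 1 := by
          rintro ⟨t, ht, h⟩
          have := hv.1.lt (show t < d by omega)
          omega
        have e := vtx_coord C hinj j (d+1)
        rw [if_neg c1, if_neg c2] at e
        rw [e, had]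
        ring
      have hvpt' : ∀ j, j ≤ d → validPt (d+1) N (vtx C j) := by
        intro j hj
        obtain ⟨o1, o2, o3⟩ := hv.2 j hj
        exact ⟨o1, fun k hk => o2 k (by omega),
          by rw [Finset.sum_range_succ, hz j hj, o3]; ring⟩
      have hpos : 1 ≤ vtx C d d := by
        obtain ⟨j₁, hj₁, hlab₁⟩ := hfull.2 d le_rfl
        have h1 : 1 ≤ vtx C j₁ d := by
          have := (hL _ (hvpt' j₁ hj₁)).2
          rwa [hlab₁] at this
        have c2 : ∀ j, j ≤ d → ¬ ∃ t, t < j ∧ C.2 t = d := by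
          rintro j hj ⟨t, ht, h⟩
          have := hv.1.lt (show t < d by omega)
          omega
        have e₁ := vtx_coord C hinj j₁ d
        have ed := vtx_coord C hinj d d
        rw [if_neg (c2 j₁ hj₁)] at e₁
        rw [if_neg (c2 d le_rfl)] at ed
        by_cases hcd : ∃ t, t < j₁ ∧ C.2 t + 1 = d
        · obtain ⟨t, ht, h⟩ := hcd
          have hcdd : ∃ t, t < d ∧ C.2 t + 1 = d := ⟨t, by omega, h⟩
          rw [if_pos ⟨t, ht, h⟩] at e₁
          rw [if_pos hcdd] at ed
          omega
        · rw [if_neg hcd] at e₁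
          by_cases hcdd : ∃ t, t < d ∧ C.2 t + 1 = d
          · rw [if_pos hcdd] at ed
            have h0 : 0 ≤ vtx C d d - 0 := by
              have := (hvpt' d le_rfl).1 d
              omega
            omega
          · rw [if_neg hcdd] at ed
            omega
      have hlast : vtx C (d+1) = fun k => vtx C d k + mv d k := by
        funext k
        simp only [vtx]
        rw [Finset.sum_range_succ, hσd]
        ring
      have hvalid' : validCell (d+1) N C := by
        refine ⟨⟨hv.1.1, fun t ht => hv.1.2 t (by omega)⟩, fun j hj => ?_⟩
        rcases Nat.lt_or_ge j (d+1) with h | h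
        · exact hvpt' j (by omega)
        · have : j = d + 1 := by omega
          rw [this, hlast]
          exact validPt_add_mv (hvpt' d le_rfl) (by omega) hpos
      have hdoor' : isDoor (d+1) N L C (d+1) := by
        refine ⟨hvalid', le_rfl, fun k hk => ?_⟩
        obtain ⟨j, hj, hlab⟩ := hfull.2 k (by omega)
        exact ⟨j, by omega, by omega, hlab⟩
      exact Finset.mem_filter.mpr ⟨Finset.mem_filter.mpr
        ⟨Finset.mem_product.mpr ⟨mem_cellsFin hvalid', Finset.mem_range.mpr (by omega)⟩,
          hdoor'⟩, rfl, hσd, had⟩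
    have step3 : (T.filter (fun p => p.2 = d + 1 ∧ p.1.2 d = d ∧ p.1.1 (d+1) = 0)).card
        = ((cellsFin d N).filter (isFull d N L)).card := by
      refine Finset.card_bij' (fun p _ => p.1) (fun C _ => (C, d+1)) fwd bwd ?_ ?_
      · intro p hp
        obtain ⟨-, hp2eq, -, -⟩ := Finset.mem_filter.mp hp
        exact Prod.ext rfl hp2eq.symm
      · intro C _
        rfl
    -- assemble
    have hprev := ih L hL'
    apply (zmod_two_iff _).mp
    rw [← step1, step2, step3]
    exact (zmod_two_iff _).mpr hprev

lemma vtx_close (C : Cell) (hinj : Function.Injective C.2) (j k : ℕ) :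
    C.1 k - 1 ≤ vtx C j k ∧ vtx C j k ≤ C.1 k + 1 := by
  have h := vtx_coord C hinj j k
  split_ifs at h <;> omega

theorem sperner_exists (d N : ℕ) (L : (ℕ → ℤ) → ℕ)
    (hL : ∀ v, validPt d N v → L v ≤ d ∧ 1 ≤ v (L v)) :
    ∃ C : Cell, isFull d N L C := by
  have hodd := sperner_odd N d L hL
  have hpos : 0 < ((cellsFin d N).filter (isFull d N L)).card := by omega
  obtain ⟨C, hC⟩ := Finset.card_pos.mp hpos
  exact ⟨C, (Finset.mem_filter.mp hC).2⟩

/-! ### From Sperner to surjectivity on the simplex -/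

theorem surj_on_simplex {m : ℕ} (hm : 1 ≤ m) (f : (Fin m → ℝ) → Fin m → ℝ)
    (hf : Continuous f) (hmap : ∀ x ∈ stdSimplex ℝ (Fin m), f x ∈ stdSimplex ℝ (Fin m))
    (hsupp : ∀ x ∈ stdSimplex ℝ (Fin m), ∀ k, x k = 0 → f x k = 0)
    {y : Fin m → ℝ} (hy : y ∈ stdSimplex ℝ (Fin m)) :
    ∃ x ∈ stdSimplex ℝ (Fin m), f x = y := by
  set d : ℕ := m - 1 with hddef
  have hdm : d + 1 = m := by omega
  -- approximate solutions at every scale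
  have approx : ∀ ε : ℝ, 0 < ε → ∃ x ∈ stdSimplex ℝ (Fin m), ∀ k, y k - ε ≤ f x k := by
    intro ε hε
    obtain ⟨δ, hδ, hδε⟩ := Metric.uniformContinuousOn_iff.mp
      ((isCompact_stdSimplex ℝ (Fin m)).uniformContinuousOn_of_continuous hf.continuousOn) ε hε
    obtain ⟨n, hn⟩ := exists_nat_gt (1/δ)
    obtain ⟨N, hN1, hNgt⟩ : ∃ N : ℕ, 1 ≤ N ∧ 1/δ < (N:ℝ) :=
      ⟨n + 1, by omega, by push_cast; linarith⟩
    have hNpos : (0:ℝ) < (N:ℝ) := by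
      have : (1:ℝ) ≤ (N:ℝ) := by exact_mod_cast hN1
      linarith
    have hNδ : 1/(N:ℝ) < δ := by
      rw [div_lt_iff₀ hNpos]
      rw [div_lt_iff₀ hδ] at hNgt
      nlinarith
    -- the associated point of the simplex
    set pt : (ℕ → ℤ) → (Fin m → ℝ) := fun v => (fun k => ((v (k:ℕ) : ℝ)) / (N:ℝ))
      with hptdef
    have hptmem : ∀ v, validPt d N v → pt v ∈ stdSimplex ℝ (Fin m) := by
      intro v hv
      constructor
      · intro k
        have := hv.1 (k : ℕ)
        have : (0:ℝ) ≤ (v (k:ℕ) : ℝ) := by exact_mod_cast this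
        positivity
      · have hsum : ∑ k : Fin m, (v (k:ℕ) : ℝ) = (N:ℝ) := by
          have h := hv.2.2
          have h2 : ((∑ k ∈ Finset.range (d+1), v k : ℤ) : ℝ) = (N:ℝ) := by
            exact_mod_cast congrArg (fun z : ℤ => (z:ℝ)) h
          push_cast at h2
          rw [Fin.sum_univ_eq_sum_range (fun k => (v k : ℝ)) m, ← hdm]
          exact h2
        have : ∑ k : Fin m, pt v k = (∑ k : Fin m, (v (k:ℕ) : ℝ)) / (N:ℝ) := by
          rw [Finset.sum_div]
        rw [this, hsum]
        field_simp
    -- the labelling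
    have hEx : ∀ v, validPt d N v → ∃ k : Fin m, 1 ≤ v (k:ℕ) ∧ y k ≤ f (pt v) k := by
      intro v hv
      by_contra hcon
      push_neg at hcon
      set s : Finset (Fin m) := Finset.univ.filter (fun k => 1 ≤ v (k:ℕ)) with hsdef
      have hx := hptmem v hv
      have hfx := hmap _ hx
      have hzero : ∀ k : Fin m, k ∉ s → f (pt v) k = 0 := by
        intro k hk
        apply hsupp _ hx
        have : ¬ 1 ≤ v (k:ℕ) := by
          intro h
          exact hk (Finset.mem_filter.mpr ⟨Finset.mem_univ _, h⟩)
        have hv0 : v (k:ℕ) = 0 := by have := hv.1 (k:ℕ); omega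
        show ((v (k:ℕ) : ℝ)) / (N:ℝ) = 0
        rw [hv0]
        simp
      have hsum1 : ∑ k ∈ s, f (pt v) k = 1 := by
        rw [← hfx.2]
        exact Finset.sum_subset (Finset.subset_univ s) (fun k _ hk => hzero k hk)
      have hne : s.Nonempty := by
        by_contra hemp
        rw [Finset.not_nonempty_iff_eq_empty] at hemp
        have hall : ∀ k : Fin m, v (k:ℕ) = 0 := by
          intro k
          have : k ∉ s := by rw [hemp]; exact Finset.notMem_empty k
          have h1 : ¬ 1 ≤ v (k:ℕ) := fun h =>
            this (Finset.mem_filter.mpr ⟨Finset.mem_univ _, h⟩)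
          have := hv.1 (k:ℕ)
          omega
        have : ∑ k ∈ Finset.range (d+1), v k = 0 := by
          apply Finset.sum_eq_zero
          intro k hk
          have hkm : k < m := by rw [← hdm]; exact Finset.mem_range.mp hk
          exact hall ⟨k, hkm⟩
        rw [hv.2.2] at this
        omega
      have hlt : ∑ k ∈ s, f (pt v) k < ∑ k ∈ s, y k := by
        apply Finset.sum_lt_sum_of_nonempty hne
        intro k hk
        exact hcon k (Finset.mem_filter.mp hk).2
      have hle : ∑ k ∈ s, y k ≤ 1 := by
        rw [← hy.2]
        apply Finset.sum_le_sum_of_subset_of_nonneg (Finset.subset_univ s)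
        intro k _ _
        exact hy.1 k
      rw [hsum1] at hlt
      linarith
    set Lf : (ℕ → ℤ) → ℕ := fun v =>
      if h : ∃ k : Fin m, 1 ≤ v (k:ℕ) ∧ y k ≤ f (pt v) k then ((h.choose : Fin m) : ℕ) else 0
      with hLfdef
    have hL : ∀ v, validPt d N v → Lf v ≤ d ∧ 1 ≤ v (Lf v) := by
      intro v hv
      have h := hEx v hv
      rw [hLfdef]
      simp only [dif_pos h]
      have hlt : ((h.choose : Fin m) : ℕ) < m := (h.choose).2
      exact ⟨by omega, h.choose_spec.1⟩
    obtain ⟨C, hCfull⟩ := sperner_exists d N Lf hL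
    have hCvalid := hCfull.1
    have hinj : Function.Injective C.2 := hCvalid.1.1.1
    -- the base point
    have hvalid0 : validPt d N C.1 := by
      have := hCvalid.2 0 (by omega)
      rwa [vtx_zero] at this
    refine ⟨pt C.1, hptmem _ hvalid0, ?_⟩
    intro k
    -- get the vertex labelled k
    obtain ⟨j, hj, hjlab⟩ := hCfull.2 (k : ℕ) (by have := k.2; omega)
    have hvj : validPt d N (vtx C j) := hCvalid.2 j hj
    have hexj := hEx _ hvj
    have hchoose : ((hexj.choose : Fin m) : ℕ) = (k : ℕ) := by
      have : Lf (vtx C j) = ((hexj.choose : Fin m) : ℕ) := by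
        rw [hLfdef]
        simp only [dif_pos hexj]
      rw [← this, hjlab]
    have hkeq : hexj.choose = k := Fin.ext hchoose
    have hspec := hexj.choose_spec
    rw [hkeq] at hspec
    -- distance between pt (vtx C j) and pt C.1
    have hdist : dist (pt (vtx C j)) (pt C.1) < δ := by
      have hle : dist (pt (vtx C j)) (pt C.1) ≤ 1/(N:ℝ) := by
        apply dist_pi_le_iff (by positivity) |>.mpr
        intro i
        rw [Real.dist_eq]
        have hcl := vtx_close C hinj j (i : ℕ)
        have h1 : |((vtx C j (i:ℕ) : ℝ)) / (N:ℝ) - ((C.1 (i:ℕ) : ℝ)) / (N:ℝ)|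
            = |((vtx C j (i:ℕ) : ℝ)) - ((C.1 (i:ℕ) : ℝ))| / (N:ℝ) := by
          rw [div_sub_div_same, abs_div, abs_of_pos hNpos]
        have habs : |((vtx C j (i:ℕ) : ℝ)) - ((C.1 (i:ℕ) : ℝ))| ≤ 1 := by
          rw [abs_le]
          constructor
          · have h2 : (C.1 (i:ℕ) : ℝ) - 1 ≤ (vtx C j (i:ℕ) : ℝ) := by exact_mod_cast hcl.1
            linarith
          · have h2 : (vtx C j (i:ℕ) : ℝ) ≤ (C.1 (i:ℕ) : ℝ) + 1 := by exact_mod_cast hcl.2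
            linarith
        show |((vtx C j (i:ℕ) : ℝ)) / (N:ℝ) - ((C.1 (i:ℕ) : ℝ)) / (N:ℝ)| ≤ 1/(N:ℝ)
        rw [h1]
        gcongr
      linarith
    have hfd : dist (f (pt (vtx C j))) (f (pt C.1)) < ε :=
      hδε _ (hptmem _ hvj) _ (hptmem _ hvalid0) hdist
    have hcomp : |f (pt (vtx C j)) k - f (pt C.1) k| ≤ dist (f (pt (vtx C j))) (f (pt C.1)) := by
      rw [← Real.dist_eq]
      exact dist_le_pi_dist _ _ k
    have := hspec.2
    rw [abs_le] at hcomp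
    linarith [hcomp.1]
  -- now take a limit point
  set K : ℕ → Set (Fin m → ℝ) := fun n =>
    {x | x ∈ stdSimplex ℝ (Fin m) ∧ ∀ k, y k - 1/((n:ℝ)+1) ≤ f x k} with hKdef
  have hKsub : ∀ n, K n ⊆ stdSimplex ℝ (Fin m) := fun n x hx => hx.1
  have hKdec : ∀ n, K (n+1) ⊆ K n := by
    intro n x hx
    refine ⟨hx.1, fun k => ?_⟩
    have h1 : 1/((n:ℝ)+1+1) ≤ 1/((n:ℝ)+1) := by
      apply one_div_le_one_div_of_le <;> push_cast <;> linarith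
    have := hx.2 k
    push_cast at this ⊢
    linarith
  have hKne : ∀ n, (K n).Nonempty := by
    intro n
    obtain ⟨x, hx, hfx⟩ := approx (1/((n:ℝ)+1)) (by positivity)
    exact ⟨x, hx, hfx⟩
  have hKcl : ∀ n, IsClosed (K n) := by
    intro n
    have h1 : IsClosed {x : Fin m → ℝ | x ∈ stdSimplex ℝ (Fin m)} := isClosed_stdSimplex ℝ (Fin m)
    have h2 : IsClosed {x : Fin m → ℝ | ∀ k, y k - 1/((n:ℝ)+1) ≤ f x k} := by
      rw [Set.setOf_forall]
      apply isClosed_iInter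
      intro k
      exact isClosed_le continuous_const ((continuous_apply k).comp hf)
    exact h1.inter h2
  have hK0 : IsCompact (K 0) :=
    (isCompact_stdSimplex ℝ (Fin m)).of_isClosed_subset (hKcl 0) (hKsub 0)
  obtain ⟨x, hx⟩ := IsCompact.nonempty_iInter_of_sequence_nonempty_isCompact_isClosed
    K hKdec hKne hK0 hKcl
  rw [Set.mem_iInter] at hx
  have hxs : x ∈ stdSimplex ℝ (Fin m) := (hx 0).1
  have hge : ∀ k, y k ≤ f x k := by
    intro k
    by_contra hcon
    push_neg at hcon
    obtain ⟨n, hn⟩ := exists_nat_gt (1/(y k - f x k))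
    have hpos : 0 < y k - f x k := by linarith
    have h1 : 1/((n:ℝ)+1) < y k - f x k := by
      rw [div_lt_iff₀ (by positivity)]
      rw [div_lt_iff₀ hpos] at hn
      nlinarith
    have := (hx n).2 k
    linarith
  refine ⟨x, hxs, ?_⟩
  have hfx := hmap x hxs
  funext k
  by_contra hne
  have hlt : y k < f x k := lt_of_le_of_ne (hge k) (Ne.symm hne)
  have hsum : ∑ j : Fin m, y j < ∑ j : Fin m, f x j := by
    apply Finset.sum_lt_sum (fun j _ => hge j)
    exact ⟨k, Finset.mem_univ k, hlt⟩
  rw [hy.2, hfx.2] at hsum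
  linarith
end

end SpernerAux

/-- If a PSO is orthogonal preserving and fixes every vertex of the simplex,
then it is surjective. -/
theorem PSO_surjective_of_orthPreserving (m l : ℕ)
    (P : (Fin l → Fin m) → Fin m → ℝ)
    (hP : ∀ i, P i ∈ stdSimplex ℝ (Fin m))
    (hsym : ∀ (i : Fin l → Fin m) (π : Equiv.Perm (Fin l)), P (i ∘ π) = P i)
    (hfix : ∀ i : Fin m, PSO m l P (Pi.single i 1) = Pi.single i 1)
    (hOP : OrthPreserving m (PSO m l P)) :
    Set.SurjOn (PSO m l P) (stdSimplex ℝ (Fin m)) (stdSimplex ℝ (Fin m)) := by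
  intro y hy
  rcases Nat.eq_zero_or_pos m with hm0 | hm
  · exfalso
    subst hm0
    have := hy.2
    simp at this
  · set f : (Fin m → ℝ) → Fin m → ℝ := PSO m l P with hfdef
    have hf : Continuous f := by
      apply continuous_pi
      intro k
      apply continuous_finset_sum
      intro i _
      exact (Continuous.mul
        (continuous_finset_prod _ (fun s _ => continuous_apply (i s))) continuous_const)
    have hsum1 : ∀ x ∈ stdSimplex ℝ (Fin m), ∑ i : Fin l → Fin m, ∏ s, x (i s) = 1 := by
      intro x hx
      have h := Finset.prod_univ_sum (fun _ : Fin l => (Finset.univ : Finset (Fin m)))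
        (fun _ j => x j)
      rw [Fintype.piFinset_univ] at h
      rw [← h, hx.2]
      exact Finset.prod_const_one
    have hmap : ∀ x ∈ stdSimplex ℝ (Fin m), f x ∈ stdSimplex ℝ (Fin m) := by
      intro x hx
      constructor
      · intro k
        apply Finset.sum_nonneg
        intro i _
        exact mul_nonneg (Finset.prod_nonneg fun s _ => hx.1 _) ((hP i).1 k)
      · show ∑ k : Fin m, ∑ i : Fin l → Fin m, (∏ s, x (i s)) * P i k = 1
        rw [Finset.sum_comm]
        have h1 : ∀ i : Fin l → Fin m,
            ∑ k : Fin m, (∏ s, x (i s)) * P i k = ∏ s, x (i s) := by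
          intro i
          rw [← Finset.mul_sum, (hP i).2, mul_one]
        rw [Finset.sum_congr rfl (fun i _ => h1 i)]
        exact hsum1 x hx
    have hsupp : ∀ x ∈ stdSimplex ℝ (Fin m), ∀ k, x k = 0 → f x k = 0 := by
      intro x hx k hxk
      have hdisj : supp x ∩ supp (Pi.single k 1) = ∅ := by
        apply Set.eq_empty_iff_forall_notMem.mpr
        rintro j ⟨hj1, hj2⟩
        have hjk : j = k := by
          by_contra hne
          exact hj2 (Pi.single_eq_of_ne hne 1)
        rw [hjk] at hj1
        exact hj1 hxk
      have h := hOP x hx _ (single_mem_stdSimplex ℝ k) hdisj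
      rw [hfix k] at h
      by_contra hne
      have hkmem : k ∈ supp (f x) ∩ supp (Pi.single k 1) := by
        refine ⟨hne, ?_⟩
        have h1 : (Pi.single k 1 : Fin m → ℝ) k = 1 := Pi.single_eq_same k 1
        simp only [supp, Set.mem_setOf_eq, h1]
        norm_num
      rw [h] at hkmem
      exact Set.notMem_empty k hkmem
    obtain ⟨x, hxs, hfx⟩ := SpernerAux.surj_on_simplex hm f hf hmap hsupp hy
    exact ⟨x, hxs, hfx⟩
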